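/- Let N ≥ 2 be an integer, δ > 0, ℓ ∈ {1,…,N}, and let r₁,…,r_N be positive real numbers. If either r_ℓ ≥ e^{(N−1)δ/4} · (∏_{i=1}^N r_i)^{1/N} or r_ℓ ≥ e^{(N−1)δ/2} · min_{1≤i≤N} r_i, then ℓ lies above a δ-gap for (r₁,…,r_N). -/
import Mathlib


set_option maxHeartbeats 2000000 in
/-- If `r_ℓ ≥ e^{(N−1)δ/4}·(∏ rᵢ)^{1/N}` or
`r_ℓ ≥ e^{(N−1)δ/2}·min rᵢ`, then `ℓ` lies above a `δ`-gap: there is a partition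
`{1,…,N} = K ⊔ J` with both parts nonempty, `ℓ ∈ J`, and
`min_{j∈J} rⱼ² ≥ e^δ·max_{k∈K} r_k²`. -/
theorem stmt_5 (N : ℕ) (hN : 2 ≤ N) (δ : ℝ) (hδ : 0 < δ)
    (ℓ : Fin N) (r : Fin N → ℝ) (hr : ∀ i, 0 < r i)
    (h : Real.exp (((N : ℝ) - 1) * δ / 4) * (∏ i, r i) ^ ((1 : ℝ) / N) ≤ r ℓ ∨
         Real.exp (((N : ℝ) - 1) * δ / 2) *
           Finset.univ.inf' ⟨⟨0, by omega⟩, Finset.mem_univ _⟩ r ≤ r ℓ) :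
    ∃ J : Finset (Fin N), ℓ ∈ J ∧ J.Nonempty ∧ Jᶜ.Nonempty ∧
      ∀ j ∈ J, ∀ k ∈ Jᶜ, Real.exp δ * r k ^ 2 ≤ r j ^ 2 := by
  by_contra hcon
  push_neg at hcon
  set a : Fin N → ℝ := fun i => r i ^ 2 with ha
  have ha_pos : ∀ i, 0 < a i := fun i => pow_pos (hr i) 2
  set σ := Tuple.sort a with hσ
  have hb : Monotone (a ∘ σ) := Tuple.monotone_sort a
  set b : Fin N → ℝ := a ∘ σ with hbdef
  set p : Fin N := σ.symm ℓ with hp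
  have hbℓ : b p = a ℓ := by simp [hbdef, hp]
  have hpN : (p : ℕ) < N := p.isLt
  -- Key step: consecutive sorted values below rank p differ by a factor < e^δ.
  have key : ∀ m : ℕ, (hm1 : m + 1 < N) → (hm0 : m < N) → m < (p : ℕ) →
      b ⟨m + 1, hm1⟩ < Real.exp δ * b ⟨m, hm0⟩ := by
    intro m hm1 hm0 hm
    set J : Finset (Fin N) := Finset.univ.filter (fun i => m < (σ.symm i : ℕ)) with hJ
    have hℓJ : ℓ ∈ J := by
      simp only [hJ, Finset.mem_filter, Finset.mem_univ, true_and]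
      exact hm
    have hJc : σ ⟨m, hm0⟩ ∈ Jᶜ := by
      simp only [hJ, Finset.mem_compl, Finset.mem_filter, Finset.mem_univ, true_and,
        Equiv.symm_apply_apply]
      omega
    obtain ⟨j, hj, k, hk, hlt⟩ := hcon J hℓJ ⟨ℓ, hℓJ⟩ ⟨_, hJc⟩
    simp only [hJ, Finset.mem_filter, Finset.mem_univ, true_and] at hj
    simp only [hJ, Finset.mem_compl, Finset.mem_filter, Finset.mem_univ, true_and,
      not_lt] at hk
    have h1 : b ⟨m + 1, hm1⟩ ≤ a j := by
      have : b ⟨m + 1, hm1⟩ ≤ b (σ.symm j) := hb (by simpa [Fin.le_def] using hj)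
      simpa [hbdef] using this
    have h2 : a k ≤ b ⟨m, hm0⟩ := by
      have : b (σ.symm k) ≤ b ⟨m, hm0⟩ := hb (by simpa [Fin.le_def] using hk)
      simpa [hbdef] using this
    calc b ⟨m + 1, hm1⟩ ≤ a j := h1
      _ < Real.exp δ * a k := hlt
      _ ≤ Real.exp δ * b ⟨m, hm0⟩ :=
        mul_le_mul_of_nonneg_left h2 (Real.exp_pos δ).le
  -- Chain: strict bound over d steps.
  have chain : ∀ d : ℕ, 1 ≤ d → ∀ m : ℕ, (hm0 : m < N) → m + d = (p : ℕ) →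
      b p < Real.exp (d * δ) * b ⟨m, hm0⟩ := by
    intro d
    induction d with
    | zero => omega
    | succ d ih =>
      intro _ m hm0 hm
      rcases Nat.eq_zero_or_pos d with hd0 | hd1
      · subst hd0
        have hm1 : m + 1 < N := by omega
        have hppm : p = ⟨m + 1, hm1⟩ := by
          apply Fin.ext
          show (p : ℕ) = m + 1
          omega
        have := key m hm1 hm0 (by omega)
        rw [hppm]
        simpa using this
      · have hm1 : m + 1 < N := by omega
        have h1 : b p < Real.exp (d * δ) * b ⟨m + 1, hm1⟩ := ih hd1 (m + 1) hm1 (by omega)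
        have h2 : b ⟨m + 1, hm1⟩ < Real.exp δ * b ⟨m, hm0⟩ := key m hm1 hm0 (by omega)
        have h3 : b p < Real.exp (d * δ) * (Real.exp δ * b ⟨m, hm0⟩) := by
          calc b p < Real.exp (d * δ) * b ⟨m + 1, hm1⟩ := h1
            _ < Real.exp (d * δ) * (Real.exp δ * b ⟨m, hm0⟩) :=
              mul_lt_mul_of_pos_left h2 (Real.exp_pos _)
        have : Real.exp ((d : ℝ) * δ) * Real.exp δ = Real.exp ((d + 1 : ℕ) * δ) := by
          rw [← Real.exp_add]; push_cast; ring_nf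
        rw [← mul_assoc, this] at h3
        exact h3
  -- Lower bound for each sorted value.
  have hlow : ∀ m : Fin N,
      Real.exp (-(((p : ℕ) - (m : ℕ) : ℕ) : ℝ) * δ) * a ℓ ≤ b m := by
    intro m
    rcases le_or_gt (p : ℕ) (m : ℕ) with hpm | hmp
    · rw [Nat.sub_eq_zero_of_le hpm]
      simp only [Nat.cast_zero, neg_zero, zero_mul, Real.exp_zero, one_mul]
      rw [← hbℓ]
      exact hb hpm
    · have hd : (m : ℕ) + ((p : ℕ) - (m : ℕ)) = (p : ℕ) := by omega
      have hc := chain ((p : ℕ) - (m : ℕ)) (by omega) (m : ℕ) m.isLt hd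
      have hm' : (⟨(m : ℕ), m.isLt⟩ : Fin N) = m := by apply Fin.ext; rfl
      rw [hm', hbℓ] at hc
      have hpos : (0 : ℝ) < Real.exp ((((p : ℕ) - (m : ℕ) : ℕ) : ℝ) * δ) := Real.exp_pos _
      rw [neg_mul, Real.exp_neg, inv_mul_le_iff₀ hpos]
      exact hc.le
  have hσprod : ∏ m, b m = ∏ i, a i := Equiv.prod_comp σ a
  -- sum of Nat-truncated gaps
  have hSsum : (∑ m : Fin N, (((p : ℕ) - (m : ℕ) : ℕ) : ℝ)) * 2 ≤ (N : ℝ) * ((N : ℝ) - 1) := by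
    have e1 : ∑ m : Fin N, ((p : ℕ) - (m : ℕ)) = ∑ m ∈ Finset.range N, ((p : ℕ) - m) := by
      rw [Fin.sum_univ_eq_sum_range]
    have e2 : ∑ m ∈ Finset.range N, ((p : ℕ) - m)
        = ∑ m ∈ Finset.range ((p : ℕ) + 1), ((p : ℕ) - m) := by
      symm
      apply Finset.sum_subset (Finset.range_subset_range.2 (by omega))
      intro x _ hx
      simp only [Finset.mem_range, not_lt] at hx
      omega
    have e3 : ∑ m ∈ Finset.range ((p : ℕ) + 1), ((p : ℕ) - m)
        = ∑ m ∈ Finset.range ((p : ℕ) + 1), m := by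
      rw [← Finset.sum_range_reflect]
      apply Finset.sum_congr rfl
      intro x hx
      simp only [Finset.mem_range] at hx
      omega
    have e4 : (∑ m ∈ Finset.range ((p : ℕ) + 1), m) * 2 = (p : ℕ) * ((p : ℕ) + 1) := by
      rw [Finset.sum_range_id_mul_two]
      simp [Nat.mul_comm]
    have : (∑ m : Fin N, ((p : ℕ) - (m : ℕ))) * 2 = (p : ℕ) * ((p : ℕ) + 1) := by
      rw [e1, e2, e3, e4]
    have hle : ((p : ℕ) * ((p : ℕ) + 1) : ℕ) ≤ N * (N - 1) := by
      have : (p : ℕ) + 1 ≤ N := by omega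
      calc (p : ℕ) * ((p : ℕ) + 1) ≤ (N - 1) * N := Nat.mul_le_mul (by omega) this
        _ = N * (N - 1) := Nat.mul_comm _ _
    have := calc (∑ m : Fin N, ((p : ℕ) - (m : ℕ))) * 2 = (p : ℕ) * ((p : ℕ) + 1) := this
      _ ≤ N * (N - 1) := hle
    have hcast : ((∑ m : Fin N, ((p : ℕ) - (m : ℕ))) * 2 : ℝ) ≤ ((N * (N - 1) : ℕ) : ℝ) := by
      exact_mod_cast this
    push_cast at hcast
    rw [Nat.cast_sub (by omega)] at hcast
    push_cast at hcast
    linarith [hcast]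
  have hz : (0 : ℕ) < N := by omega
  have hb0le : ∀ i, b ⟨0, hz⟩ ≤ a i := by
    intro i
    have : b ⟨0, hz⟩ ≤ b (σ.symm i) := hb (Nat.zero_le _)
    simpa [hbdef] using this
  have hbpos : ∀ m, 0 < b m := fun m => ha_pos _
  clear_value p b σ
  rcases h with h1 | h2
  · -- geometric mean case
    set P : ℝ := ∏ i, r i with hPdef
    have hP : 0 < P := Finset.prod_pos (fun i _ => hr i)
    have hPa : 0 < ∏ i, a i := Finset.prod_pos (fun i _ => ha_pos i)
    have hNne : (N : ℝ) ≠ 0 := by positivity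
    have h1N : (Real.exp (((N : ℝ) - 1) * δ / 4) * P ^ ((1 : ℝ) / N)) ^ N ≤ r ℓ ^ N :=
      pow_le_pow_left₀ (by positivity) h1 N
    have hrw : (Real.exp (((N : ℝ) - 1) * δ / 4) * P ^ ((1 : ℝ) / N)) ^ N
        = Real.exp ((N : ℝ) * (((N : ℝ) - 1) * δ / 4)) * P := by
      rw [mul_pow, ← Real.exp_nat_mul, ← Real.rpow_natCast (P ^ ((1 : ℝ) / N)) N,
        ← Real.rpow_mul hP.le]
      rw [one_div, inv_mul_cancel₀ hNne, Real.rpow_one]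
    rw [hrw] at h1N
    have hA : Real.exp ((N : ℝ) * ((N : ℝ) - 1) * δ / 2) * ∏ i, a i ≤ a ℓ ^ N := by
      have hsq := mul_le_mul h1N h1N (mul_pos (Real.exp_pos _) hP).le
        (pow_nonneg (hr ℓ).le N)
      have e1 : Real.exp ((N : ℝ) * (((N : ℝ) - 1) * δ / 4))
          * Real.exp ((N : ℝ) * (((N : ℝ) - 1) * δ / 4))
          = Real.exp ((N : ℝ) * ((N : ℝ) - 1) * δ / 2) := by
        rw [← Real.exp_add]; ring_nf
      have e2 : (∏ i, a i) = P * P := by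
        rw [hPdef, ha, Finset.prod_pow]
        ring
      have e3 : a ℓ ^ N = r ℓ ^ N * r ℓ ^ N := by
        rw [ha]
        rw [← pow_mul, ← pow_add]
        ring_nf
      rw [e2, e3]
      calc Real.exp ((N : ℝ) * ((N : ℝ) - 1) * δ / 2) * (P * P)
          = (Real.exp ((N : ℝ) * (((N : ℝ) - 1) * δ / 4)) * P)
            * (Real.exp ((N : ℝ) * (((N : ℝ) - 1) * δ / 4)) * P) := by
            rw [← e1]; ring
        _ ≤ r ℓ ^ N * r ℓ ^ N := hsq
    set f : Fin N → ℝ := fun m => Real.exp (-(((p : ℕ) - (m : ℕ) : ℕ) : ℝ) * δ) * a ℓ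
      with hfdef
    have hfprod : ∏ m, f m
        = Real.exp (-(∑ m : Fin N, (((p : ℕ) - (m : ℕ) : ℕ) : ℝ)) * δ) * a ℓ ^ N := by
      rw [hfdef]
      rw [Finset.prod_mul_distrib, Finset.prod_const, Finset.card_univ, Fintype.card_fin,
        ← Real.exp_sum]
      congr 1
      congr 1
      rw [← Finset.sum_mul, ← Finset.sum_neg_distrib]
    set S : ℝ := ∑ m : Fin N, (((p : ℕ) - (m : ℕ) : ℕ) : ℝ) with hSdef
    have hSnn : 0 ≤ S := Finset.sum_nonneg (fun m _ => by positivity)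
    have hexp1 : 1 ≤ Real.exp (-S * δ) * Real.exp ((N : ℝ) * ((N : ℝ) - 1) * δ / 2) := by
      rw [← Real.exp_add]
      apply Real.one_le_exp
      nlinarith [hSsum, hδ.le]
    have hprodle : ∏ m, f m ≤ ∏ m, b m :=
      Finset.prod_le_prod (fun m _ => (mul_pos (Real.exp_pos _) (ha_pos ℓ)).le)
        (fun m _ => hlow m)
    rcases Nat.eq_zero_or_pos (p : ℕ) with hp0 | hp1
    · -- p = 0 : all terms equal a ℓ, use strict exp
      have hS0 : S = 0 := by
        rw [hSdef]
        apply Finset.sum_eq_zero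
        intro m _
        simp [hp0]
      have hTpos : (0 : ℝ) < (N : ℝ) * ((N : ℝ) - 1) * δ / 2 := by
        have h2N : (2 : ℝ) ≤ (N : ℝ) := by exact_mod_cast hN
        nlinarith [mul_pos (mul_pos (by linarith : (0:ℝ) < (N:ℝ))
          (by linarith : (0:ℝ) < (N:ℝ) - 1)) hδ]
      have hexplt : 1 < Real.exp ((N : ℝ) * ((N : ℝ) - 1) * δ / 2) :=
        Real.one_lt_exp_iff.2 hTpos
      rw [hfprod, hS0, hσprod] at hprodle
      simp only [neg_zero, zero_mul, Real.exp_zero, one_mul] at hprodle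
      nlinarith [hA, hprodle, hPa, pow_pos (ha_pos ℓ) N]
    · -- p ≥ 1 : strict inequality at index 0
      have hstrict : ∏ m, f m < ∏ m, b m := by
        apply Finset.prod_lt_prod (fun m _ => mul_pos (Real.exp_pos _) (ha_pos ℓ))
          (fun m _ => hlow m)
        refine ⟨⟨0, hz⟩, Finset.mem_univ _, ?_⟩
        have hc := chain (p : ℕ) hp1 0 hz (by omega)
        rw [hbℓ] at hc
        show Real.exp (-(((p : ℕ) - 0 : ℕ) : ℝ) * δ) * a ℓ < b ⟨0, hz⟩
        rw [Nat.sub_zero, neg_mul, Real.exp_neg, inv_mul_lt_iff₀ (Real.exp_pos _)]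
        exact hc
      rw [hfprod, hσprod] at hstrict
      nlinarith [hA, hstrict, hPa, pow_pos (ha_pos ℓ) N, hexp1,
        Real.exp_pos (-S * δ), Real.exp_pos ((N : ℝ) * ((N : ℝ) - 1) * δ / 2)]
  · -- min case
    obtain ⟨i0, -, hi0⟩ := Finset.exists_mem_eq_inf'
      (⟨⟨0, by omega⟩, Finset.mem_univ _⟩ : (Finset.univ : Finset (Fin N)).Nonempty) r
    rw [hi0] at h2
    have hee : Real.exp (((N : ℝ) - 1) * δ / 2) * Real.exp (((N : ℝ) - 1) * δ / 2)
        = Real.exp (((N : ℝ) - 1) * δ) := by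
      rw [← Real.exp_add]; ring_nf
    have h2sq : Real.exp (((N : ℝ) - 1) * δ) * a i0 ≤ a ℓ := by
      have := mul_le_mul h2 h2 (mul_pos (Real.exp_pos _) (hr i0)).le ((hr ℓ).le)
      have hai : a i0 = r i0 * r i0 := by rw [ha]; ring
      have hal : a ℓ = r ℓ * r ℓ := by rw [ha]; ring
      rw [hai, hal]
      nlinarith [this, hee]
    have hb0 : b ⟨0, hz⟩ ≤ a i0 := hb0le i0
    have hb0pos : 0 < b ⟨0, hz⟩ := hbpos _
    rcases Nat.eq_zero_or_pos (p : ℕ) with hp0 | hp1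
    · have hpz : p = ⟨0, hz⟩ := by
        apply Fin.ext
        show (p : ℕ) = 0
        omega
      have hal : a ℓ = b ⟨0, hz⟩ := by rw [← hbℓ, hpz]
      have hexplt : 1 < Real.exp (((N : ℝ) - 1) * δ) := by
        apply Real.one_lt_exp_iff.2
        have : (2 : ℝ) ≤ (N : ℝ) := by exact_mod_cast hN
        nlinarith
      nlinarith [h2sq, hb0, ha_pos i0, hal]
    · have hc := chain (p : ℕ) hp1 0 hz (by omega)
      rw [hbℓ] at hc
      have hple : Real.exp (((p : ℕ) : ℝ) * δ) ≤ Real.exp (((N : ℝ) - 1) * δ) := by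
        apply Real.exp_le_exp.2
        have : ((p : ℕ) : ℝ) ≤ (N : ℝ) - 1 := by
          have : (p : ℕ) ≤ N - 1 := by omega
          have h' : ((p : ℕ) : ℝ) ≤ ((N - 1 : ℕ) : ℝ) := by exact_mod_cast this
          rw [Nat.cast_sub (by omega)] at h'
          simpa using h'
        nlinarith [hδ.le]
      nlinarith [h2sq, hb0, hc, hb0pos, Real.exp_pos (((p : ℕ) : ℝ) * δ)]
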